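/- Let c > 0, 0 < ε ≤ x₀, and let t : [−ε, ε] → ℝ be differentiable. Suppose that for all x ∈ [−ε, ε]: −ε(2c + c²ε) < 1 − 2φ''(x)·t(x) < 0, −2ε(2c + c²ε) < t'(x) < 0, and √(1 + φ'(x)²) < 2·√(1 + φ'(0)²). Then for every x ∈ [−ε, ε] the Euclidean norm of d/dx W(x, t(x)) is at most 10·ε·(2c + c²ε)·(1 + φ'(0)²), and consequently the arclength of the curve x ↦ W(x, t(x)) over [−ε, ε] is at most 20·ε²·(2c + c²ε)·(1 + φ'(0)²). -/

import Mathlib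

/-- The Euclidean norm on `ℝ × ℝ`. -/
noncomputable def euclNorm (u : ℝ × ℝ) : ℝ := Real.sqrt (u.1 ^ 2 + u.2 ^ 2)

/-- `W(x,t) = (x, φ(x)) + t·(−2φ'(x), 1 − φ'(x)²)`. -/
noncomputable def Wmap (φ φ' : ℝ → ℝ) (x t : ℝ) : ℝ × ℝ :=
  (x, φ x) + t • (-2 * φ' x, 1 - (φ' x) ^ 2)

lemma euclNorm_eq_norm (u : ℝ × ℝ) :
    euclNorm u = ‖(WithLp.equiv 2 (ℝ × ℝ)).symm u‖ := by
  rw [WithLp.prod_norm_eq_of_L2]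
  simp [euclNorm, Real.norm_eq_abs, sq_abs]

lemma euclNorm_add_le (u v : ℝ × ℝ) : euclNorm (u + v) ≤ euclNorm u + euclNorm v := by
  simp only [euclNorm_eq_norm]
  exact norm_add_le _ _

lemma euclNorm_smul (r : ℝ) (u : ℝ × ℝ) : euclNorm (r • u) = |r| * euclNorm u := by
  simp only [euclNorm_eq_norm]
  rw [show (WithLp.equiv 2 (ℝ × ℝ)).symm (r • u) = r • (WithLp.equiv 2 (ℝ × ℝ)).symm u from rfl,
    norm_smul, Real.norm_eq_abs]

/-- Under the stated bounds, `‖d/dx W(x,t(x))‖ ≤ 10ε(2c + c²ε)(1 + φ'(0)²)` on `[−ε, ε]`,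
and hence the arclength of the curve `x ↦ W(x, t(x))` is at most
`20ε²(2c + c²ε)(1 + φ'(0)²)`. -/
theorem reflecting_curve_length_bound (x₀ ε c : ℝ) (hx₀ : 0 < x₀) (hε : 0 < ε)
    (hεx₀ : ε ≤ x₀) (hc : 0 < c) (φ φ' φ'' t t' : ℝ → ℝ)
    (hφ : ∀ x ∈ Set.Icc (-x₀) x₀, HasDerivAt φ (φ' x) x)
    (hφ' : ∀ x ∈ Set.Icc (-x₀) x₀, HasDerivAt φ' (φ'' x) x)
    (hφ''c : ContinuousOn φ'' (Set.Icc (-x₀) x₀))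
    (ht : ∀ x ∈ Set.Icc (-ε) ε, HasDerivAt t (t' x) x)
    (h1 : ∀ x ∈ Set.Icc (-ε) ε,
      -(ε * (2 * c + c ^ 2 * ε)) < 1 - 2 * φ'' x * t x ∧ 1 - 2 * φ'' x * t x < 0)
    (h2 : ∀ x ∈ Set.Icc (-ε) ε,
      -(2 * ε * (2 * c + c ^ 2 * ε)) < t' x ∧ t' x < 0)
    (h3 : ∀ x ∈ Set.Icc (-ε) ε,
      Real.sqrt (1 + (φ' x) ^ 2) < 2 * Real.sqrt (1 + (φ' 0) ^ 2)) :
    (∀ x ∈ Set.Icc (-ε) ε,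
      euclNorm (deriv (fun s => Wmap φ φ' s (t s)) x)
        ≤ 10 * ε * (2 * c + c ^ 2 * ε) * (1 + (φ' 0) ^ 2)) ∧
    (∫ x in (-ε)..ε, euclNorm (deriv (fun s => Wmap φ φ' s (t s)) x))
      ≤ 20 * ε ^ 2 * (2 * c + c ^ 2 * ε) * (1 + (φ' 0) ^ 2) := by
  set A : ℝ := ε * (2 * c + c ^ 2 * ε) with hA
  have hApos : 0 < A := by positivity
  -- derivative formula
  have hW : ∀ x ∈ Set.Icc (-ε) ε, HasDerivAt (fun s => Wmap φ φ' s (t s))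
      ((1 - 2 * φ'' x * t x) • ((1 : ℝ), φ' x)
        + t' x • (-2 * φ' x, 1 - (φ' x) ^ 2)) x := by
    intro x hx
    have hx' : x ∈ Set.Icc (-x₀) x₀ :=
      ⟨le_trans (neg_le_neg hεx₀) hx.1, le_trans hx.2 hεx₀⟩
    have hφx := hφ x hx'
    have hφ'x := hφ' x hx'
    have htx := ht x hx
    have hfun : (fun s => Wmap φ φ' s (t s))
        = fun s => ((s + t s * (-2 * φ' s), φ s + t s * (1 - (φ' s) ^ 2)) : ℝ × ℝ) := by
      funext s
      simp [Wmap, Prod.ext_iff, smul_eq_mul]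
    rw [hfun]
    have h1d : HasDerivAt (fun s => s + t s * (-2 * φ' s))
        (1 + (t' x * (-2 * φ' x) + t x * (-2 * φ'' x))) x :=
      (hasDerivAt_id x).add (htx.mul (hφ'x.const_mul (-2)))
    have h2d : HasDerivAt (fun s => φ s + t s * (1 - (φ' s) ^ 2))
        (φ' x + (t' x * (1 - (φ' x) ^ 2) + t x * (-(2 * φ' x ^ 1 * φ'' x)))) x :=
      hφx.add (htx.mul ((hφ'x.pow 2).const_sub 1))
    have := h1d.prodMk h2d
    convert this using 1
    simp only [Prod.smul_mk, smul_eq_mul, Prod.mk_add_mk, Prod.ext_iff]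
    constructor <;> ring
  have key : ∀ x ∈ Set.Icc (-ε) ε,
      euclNorm (deriv (fun s => Wmap φ φ' s (t s)) x)
        ≤ 10 * ε * (2 * c + c ^ 2 * ε) * (1 + (φ' 0) ^ 2) := by
    intro x hx
    rw [(hW x hx).deriv]
    have habs1 : |1 - 2 * φ'' x * t x| ≤ A := by
      rcases h1 x hx with ⟨hl, hr⟩
      rw [abs_le]; constructor <;> nlinarith
    have habs2 : |t' x| ≤ 2 * A := by
      rcases h2 x hx with ⟨hl, hr⟩
      rw [abs_le]; constructor <;> nlinarith
    have hs0 : (0:ℝ) ≤ 1 + (φ' 0) ^ 2 := by positivity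
    have hsx : Real.sqrt (1 + (φ' x) ^ 2) ≤ 2 * Real.sqrt (1 + (φ' 0) ^ 2) :=
      (h3 x hx).le
    have hsq0 : Real.sqrt (1 + (φ' 0) ^ 2) ^ 2 = 1 + (φ' 0) ^ 2 :=
      Real.sq_sqrt hs0
    have hsqx : Real.sqrt (1 + (φ' x) ^ 2) ^ 2 = 1 + (φ' x) ^ 2 :=
      Real.sq_sqrt (by positivity)
    have hsx2 : 1 + (φ' x) ^ 2 ≤ 4 * (1 + (φ' 0) ^ 2) := by
      nlinarith [Real.sqrt_nonneg (1 + (φ' x) ^ 2), Real.sqrt_nonneg (1 + (φ' 0) ^ 2)]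
    have hs0le : Real.sqrt (1 + (φ' 0) ^ 2) ≤ 1 + (φ' 0) ^ 2 := by
      nlinarith [Real.sqrt_nonneg (1 + (φ' 0) ^ 2)]
    have hn1 : euclNorm ((1 : ℝ), φ' x) = Real.sqrt (1 + (φ' x) ^ 2) := by
      simp [euclNorm]
    have hn2 : euclNorm (-2 * φ' x, 1 - (φ' x) ^ 2) = 1 + (φ' x) ^ 2 := by
      have h : (-2 * φ' x) ^ 2 + (1 - (φ' x) ^ 2) ^ 2 = (1 + (φ' x) ^ 2) ^ 2 := by ring
      rw [euclNorm, h, Real.sqrt_sq (by positivity)]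
    calc euclNorm ((1 - 2 * φ'' x * t x) • ((1 : ℝ), φ' x)
          + t' x • (-2 * φ' x, 1 - (φ' x) ^ 2))
        ≤ euclNorm ((1 - 2 * φ'' x * t x) • ((1 : ℝ), φ' x))
          + euclNorm (t' x • (-2 * φ' x, 1 - (φ' x) ^ 2)) := euclNorm_add_le _ _
      _ = |1 - 2 * φ'' x * t x| * Real.sqrt (1 + (φ' x) ^ 2)
          + |t' x| * (1 + (φ' x) ^ 2) := by rw [euclNorm_smul, euclNorm_smul, hn1, hn2]
      _ ≤ A * (2 * Real.sqrt (1 + (φ' 0) ^ 2)) + 2 * A * (4 * (1 + (φ' 0) ^ 2)) := by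
          gcongr <;> first
            | exact Real.sqrt_nonneg _
            | positivity
            | assumption
      _ ≤ 10 * ε * (2 * c + c ^ 2 * ε) * (1 + (φ' 0) ^ 2) := by
          rw [hA] at *
          nlinarith
  refine ⟨key, ?_⟩
  have hnorm : ‖∫ x in (-ε)..ε, euclNorm (deriv (fun s => Wmap φ φ' s (t s)) x)‖
      ≤ 10 * ε * (2 * c + c ^ 2 * ε) * (1 + (φ' 0) ^ 2) * |ε - (-ε)| := by
    apply intervalIntegral.norm_integral_le_of_norm_le_const
    intro x hx
    have hx' : x ∈ Set.Icc (-ε) ε := Set.uIoc_subset_uIcc (by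
      simpa using hx) |> fun h => by
        rw [Set.uIcc_of_le (by linarith)] at h; exact h
    rw [Real.norm_eq_abs, abs_of_nonneg (show (0:ℝ) ≤ euclNorm _ from Real.sqrt_nonneg _)]
    exact key x hx'
  have h2ε : |ε - (-ε)| = 2 * ε := by
    rw [abs_of_nonneg (by linarith)]; ring
  rw [h2ε] at hnorm
  calc (∫ x in (-ε)..ε, euclNorm (deriv (fun s => Wmap φ φ' s (t s)) x))
      ≤ ‖∫ x in (-ε)..ε, euclNorm (deriv (fun s => Wmap φ φ' s (t s)) x)‖ :=
        le_abs_self _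
    _ ≤ 10 * ε * (2 * c + c ^ 2 * ε) * (1 + (φ' 0) ^ 2) * (2 * ε) := hnorm
    _ = 20 * ε ^ 2 * (2 * c + c ^ 2 * ε) * (1 + (φ' 0) ^ 2) := by ring
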